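/- Let A be a nonnegative regular summability matrix, (X,d) a metric space, and x = (x_k) a sequence in X. If x is A-statistically convergent to μ ∈ X, then Λ_x^A = Γ_x^A = {μ}, i.e., μ is the unique A-statistical limit point and the unique A-statistical cluster point of x. -/

import Mathlib

open Filter Topology

/-- `a` is a nonnegative regular summability matrix. -/
def IsRegularMatrix (a : ℕ → ℕ → ℝ) : Prop :=
  (∀ n k, 0 ≤ a n k) ∧
  (∀ n, Summable (a n)) ∧
  (∃ C : ℝ, ∀ n, ∑' k, a n k ≤ C) ∧
  (∀ k, Tendsto (fun n => a n k) atTop (𝓝 0)) ∧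
  Tendsto (fun n => ∑' k, a n k) atTop (𝓝 1)

/-- The set `B ⊆ ℕ` has `A`-density `d`: `lim_n Σ_{k ∈ B} a n k = d`. -/
def HasADensity (a : ℕ → ℕ → ℝ) (B : Set ℕ) (d : ℝ) : Prop :=
  Tendsto (fun n => ∑' k, Set.indicator B (a n) k) atTop (𝓝 d)

/-- `x` is `A`-statistically convergent to `L`. -/
def AStatTendsto {X : Type*} [MetricSpace X] (a : ℕ → ℕ → ℝ) (x : ℕ → X) (L : X) : Prop :=
  ∀ ε > 0, HasADensity a {k | ε ≤ dist (x k) L} 0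

/-- `x` is `A`-statistically Cauchy. -/
def AStatCauchy {X : Type*} [MetricSpace X] (a : ℕ → ℕ → ℝ) (x : ℕ → X) : Prop :=
  ∀ ε > 0, ∃ k₀ : ℕ, HasADensity a {k | ε ≤ dist (x k) (x k₀)} 0

/-- `p` is an `A`-statistical limit point of `x`: some subsequence of `x` indexed by an
(infinite) index set not having `A`-density zero converges to `p`. -/
def AStatLimitPt {X : Type*} [MetricSpace X] (a : ℕ → ℕ → ℝ) (x : ℕ → X) (p : X) : Prop :=
  ∃ q : ℕ → ℕ, StrictMono q ∧ ¬ HasADensity a (Set.range q) 0 ∧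
    Tendsto (fun n => x (q n)) atTop (𝓝 p)

/-- `p` is an `A`-statistical cluster point of `x`. -/
def AStatClusterPt {X : Type*} [MetricSpace X] (a : ℕ → ℕ → ℝ) (x : ℕ → X) (p : X) : Prop :=
  ∀ ε > 0, ¬ HasADensity a {k | dist (x k) p < ε} 0

/-- `p` is an ordinary limit point of the sequence `x`: some subsequence converges to `p`. -/
def OrdLimitPt {X : Type*} [MetricSpace X] (x : ℕ → X) (p : X) : Prop :=
  ∃ q : ℕ → ℕ, StrictMono q ∧ Tendsto (fun n => x (q n)) atTop (𝓝 p)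

/-- `x` is strongly `A`-summable to `L`: `lim_j Σ_k a j k * d(x k, L) = 0`. -/
def StrongASummable {X : Type*} [MetricSpace X] (a : ℕ → ℕ → ℝ) (x : ℕ → X) (L : X) : Prop :=
  Tendsto (fun j => ∑' k, a j k * dist (x k) L) atTop (𝓝 0)

section Aux
variable {a : ℕ → ℕ → ℝ}

lemma dens_subset (pos : ∀ n k, 0 ≤ a n k) (summ : ∀ n, Summable (a n))
    {B C : Set ℕ} (hBC : B ⊆ C) (hC : HasADensity a C 0) :
    HasADensity a B 0 := by
  refine squeeze_zero (fun n => tsum_nonneg fun k => Set.indicator_nonneg (fun k _ => pos n k) k)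
    (fun n => ?_) hC
  exact Summable.tsum_le_tsum
    (fun k => Set.indicator_le_indicator_of_subset hBC (fun k => pos n k) k)
    ((summ n).indicator B) ((summ n).indicator C)

lemma dens_union (pos : ∀ n k, 0 ≤ a n k) (summ : ∀ n, Summable (a n))
    {B C : Set ℕ} (hB : HasADensity a B 0) (hC : HasADensity a C 0) :
    HasADensity a (B ∪ C) 0 := by
  refine squeeze_zero (fun n => tsum_nonneg fun k => Set.indicator_nonneg (fun k _ => pos n k) k)
    (fun n => ?_) (by simpa using hB.add hC)
  rw [← Summable.tsum_add ((summ n).indicator B) ((summ n).indicator C)]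
  refine Summable.tsum_le_tsum (fun k => ?_) ((summ n).indicator (B ∪ C))
    (((summ n).indicator B).add ((summ n).indicator C))
  by_cases hk : k ∈ B ∪ C
  · rw [Set.indicator_of_mem hk]
    rcases hk with hk | hk
    · rw [Set.indicator_of_mem hk]
      exact le_add_of_nonneg_right (Set.indicator_nonneg (fun k _ => pos n k) k)
    · rw [Set.indicator_of_mem (s := C) hk]
      exact le_add_of_nonneg_left (Set.indicator_nonneg (fun k _ => pos n k) k)
  · rw [Set.indicator_of_notMem hk]
    exact add_nonneg (Set.indicator_nonneg (fun k _ => pos n k) k)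
      (Set.indicator_nonneg (fun k _ => pos n k) k)

lemma dens_finite (cols : ∀ k, Tendsto (fun n => a n k) atTop (𝓝 0))
    {B : Set ℕ} (hB : B.Finite) : HasADensity a B 0 := by
  have hrw : ∀ n, ∑' k, Set.indicator B (a n) k = ∑ k ∈ hB.toFinset, a n k := by
    intro n
    rw [tsum_eq_sum (s := hB.toFinset) (fun k hk => Set.indicator_of_notMem
      (by simpa using hk) _)]
    exact Finset.sum_congr rfl fun k hk => Set.indicator_of_mem (by simpa using hk) _
  have h2 : Tendsto (fun n => ∑ k ∈ hB.toFinset, a n k) atTop (𝓝 0) := by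
    have := tendsto_finset_sum hB.toFinset (fun k (_ : k ∈ hB.toFinset) => cols k)
    simpa using this
  exact h2.congr fun n => (hrw n).symm

end Aux

section Aux2
variable {a : ℕ → ℕ → ℝ}

/-- complement: if B has density 0 and total → 1, then Σ_{Bᶜ} → 1 -/
lemma dens_compl (summ : ∀ n, Summable (a n))
    (tot : Tendsto (fun n => ∑' k, a n k) atTop (𝓝 1))
    {B : Set ℕ} (hB : HasADensity a B 0) :
    Tendsto (fun n => ∑' k, Set.indicator Bᶜ (a n) k) atTop (𝓝 1) := by
  have hrw : ∀ n, ∑' k, Set.indicator Bᶜ (a n) k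
      = (∑' k, a n k) - ∑' k, Set.indicator B (a n) k := by
    intro n
    have h1 : ∀ k, Set.indicator B (a n) k + Set.indicator Bᶜ (a n) k = a n k := by
      intro k
      by_cases hk : k ∈ B
      · simp [Set.indicator_of_mem hk, Set.indicator_of_notMem (by simpa using hk : k ∉ Bᶜ)]
      · simp [Set.indicator_of_notMem hk, Set.indicator_of_mem (by simpa using hk : k ∈ Bᶜ)]
    have := Summable.tsum_add ((summ n).indicator B) ((summ n).indicator Bᶜ)
    have h2 : ∑' k, (Set.indicator B (a n) k + Set.indicator Bᶜ (a n) k) = ∑' k, a n k :=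
      tsum_congr h1
    linarith [this, h2]
  have : Tendsto (fun n => (∑' k, a n k) - ∑' k, Set.indicator B (a n) k) atTop (𝓝 (1 - 0)) :=
    tot.sub hB
  simpa using this.congr fun n => (hrw n).symm

/-- Step lemma: given a set M with Σ_{M} a n k → 1, for any m N we can find n ≥ N and a
finite nonempty F ⊆ M with all elements > m and Σ_{k∈F} a n k > 1/4. -/
lemma step_lemma (pos : ∀ n k, 0 ≤ a n k) (summ : ∀ n, Summable (a n))
    (cols : ∀ k, Tendsto (fun n => a n k) atTop (𝓝 0))
    {M : Set ℕ} (hM : Tendsto (fun n => ∑' k, Set.indicator M (a n) k) atTop (𝓝 1))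
    (m N : ℕ) :
    ∃ p : Finset ℕ × ℕ, N ≤ p.2 ∧ p.1.Nonempty ∧ (↑p.1 : Set ℕ) ⊆ M ∧
      (∀ k ∈ p.1, m < k) ∧ (1/4 : ℝ) < ∑ k ∈ p.1, a p.2 k := by
  classical
  have hG : HasADensity a {k | k ≤ m} 0 := dens_finite cols (Set.finite_Iic m)
  have hev : ∀ᶠ n in atTop, (3/4 : ℝ) < ∑' k, Set.indicator M (a n) k ∧
      (∑' k, Set.indicator {k | k ≤ m} (a n) k) < 1/4 ∧ N ≤ n := by
    refine ((hM.eventually (eventually_gt_nhds (show (3/4:ℝ)<1 by norm_num))).and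
      ((hG.eventually (eventually_lt_nhds (show (0:ℝ)<1/4 by norm_num))).and (eventually_ge_atTop N))).mono ?_
    tauto
  obtain ⟨n, hn1, hn2, hn3⟩ := hev.exists
  set S : Set ℕ := M ∩ {k | m < k} with hS
  have hsum : Summable (Set.indicator S (a n)) := (summ n).indicator S
  have hptw : ∀ k, Set.indicator M (a n) k ≤
      Set.indicator S (a n) k + Set.indicator {k | k ≤ m} (a n) k := by
    intro k
    by_cases hk : k ∈ M
    · rw [Set.indicator_of_mem hk]
      by_cases hk2 : m < k
      · rw [Set.indicator_of_mem (show k ∈ S from ⟨hk, hk2⟩)]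
        exact le_add_of_nonneg_right (Set.indicator_nonneg (fun k _ => pos n k) k)
      · rw [Set.indicator_of_mem (show k ∈ {k | k ≤ m} from not_lt.mp hk2)]
        exact le_add_of_nonneg_left (Set.indicator_nonneg (fun k _ => pos n k) k)
    · rw [Set.indicator_of_notMem hk]
      exact add_nonneg (Set.indicator_nonneg (fun k _ => pos n k) k)
        (Set.indicator_nonneg (fun k _ => pos n k) k)
  have hSbig : (1/2 : ℝ) < ∑' k, Set.indicator S (a n) k := by
    have h1 : ∑' k, Set.indicator M (a n) k ≤
        (∑' k, Set.indicator S (a n) k) + ∑' k, Set.indicator {k | k ≤ m} (a n) k := by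
      rw [← Summable.tsum_add hsum ((summ n).indicator _)]
      exact Summable.tsum_le_tsum hptw ((summ n).indicator M) (hsum.add ((summ n).indicator _))
    linarith
  -- extract a finite subset with sum > 1/4
  have hfin : ∃ s : Finset ℕ, (1/4 : ℝ) < ∑ k ∈ s, Set.indicator S (a n) k := by
    have := hsum.hasSum
    have h2 : (1/4 : ℝ) < ∑' k, Set.indicator S (a n) k := by linarith
    exact (this.eventually (eventually_gt_nhds h2)).exists
  obtain ⟨s, hs⟩ := hfin
  refine ⟨⟨s.filter (fun k => k ∈ S), n⟩, hn3, ?_, ?_, ?_, ?_⟩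
  · by_contra hne
    rw [Finset.not_nonempty_iff_eq_empty] at hne
    have : ∑ k ∈ s, Set.indicator S (a n) k = 0 := by
      rw [Finset.sum_indicator_eq_sum_filter, show s.filter (fun k => k ∈ S) = ∅ from hne, Finset.sum_empty]
    linarith
  · intro k hk
    simp only [Finset.coe_filter, Set.mem_setOf_eq] at hk
    exact hk.2.1
  · intro k hk
    simp only [Finset.mem_filter] at hk
    exact hk.2.2
  · have : ∑ k ∈ s.filter (fun k => k ∈ S), a n k = ∑ k ∈ s, Set.indicator S (a n) k := by
      rw [Finset.sum_indicator_eq_sum_filter]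
    simpa [this] using hs

end Aux2

/-- iterate a choice function to build blocks -/
noncomputable def blockSeq (g : ℕ → ℕ → ℕ → Finset ℕ × ℕ) : ℕ → Finset ℕ × ℕ
  | 0 => g 0 0 0
  | j + 1 => g (j + 1) ((blockSeq g j).1.sup id) ((blockSeq g j).2 + 1)

theorem stmt11 {X : Type*} [MetricSpace X] {a : ℕ → ℕ → ℝ} (hA : IsRegularMatrix a)
    {x : ℕ → X} {μ : X} (h : AStatTendsto a x μ) :
    {p | AStatLimitPt a x p} = {μ} ∧ {p | AStatClusterPt a x p} = {μ} := by
  classical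
  obtain ⟨pos, summ, -, cols, tot⟩ := hA
  -- μ is a cluster point
  have hclμ : AStatClusterPt a x μ := by
    intro ε hε hd
    have hu : HasADensity a ({k | dist (x k) μ < ε} ∪ {k | ε ≤ dist (x k) μ}) 0 :=
      dens_union pos summ hd (h ε hε)
    have huniv : ({k | dist (x k) μ < ε} ∪ {k | ε ≤ dist (x k) μ}) = Set.univ := by
      ext k; simp [lt_or_ge]
    rw [huniv] at hu
    have h0 : Tendsto (fun n => ∑' k, a n k) atTop (𝓝 0) := by
      simpa [HasADensity, Set.indicator_univ] using hu
    exact zero_ne_one (tendsto_nhds_unique h0 tot)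
  -- cluster points ⊆ {μ}
  have hclsub : ∀ p, AStatClusterPt a x p → p = μ := by
    intro p hp
    by_contra hne
    have hdp : 0 < dist p μ := dist_pos.mpr hne
    have hεpos : 0 < dist p μ / 2 := by positivity
    refine hp _ hεpos (dens_subset pos summ ?_ (h _ hεpos))
    intro k hk
    simp only [Set.mem_setOf_eq] at hk ⊢
    have h1 := dist_triangle p (x k) μ
    have h2 : dist p (x k) = dist (x k) p := dist_comm _ _
    linarith
  -- limit points ⊆ {μ}
  have hlimsub : ∀ p, AStatLimitPt a x p → p = μ := by
    rintro p ⟨q, hq, hnd, hqp⟩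
    by_contra hne
    have hdp : 0 < dist p μ := dist_pos.mpr hne
    have hεpos : 0 < dist p μ / 2 := by positivity
    rw [Metric.tendsto_atTop] at hqp
    obtain ⟨N, hN⟩ := hqp _ hεpos
    refine hnd (dens_subset pos summ (C := (q '' Set.Iio N) ∪ {k | dist p μ / 2 ≤ dist (x k) μ})
      ?_ (dens_union pos summ (dens_finite cols ((Set.finite_Iio N).image q)) (h _ hεpos)))
    rintro - ⟨n, rfl⟩
    by_cases hn : n < N
    · exact Or.inl ⟨n, hn, rfl⟩
    · refine Or.inr ?_
      have h1 := hN n (not_lt.mp hn)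
      simp only [Set.mem_setOf_eq]
      have h2 := dist_triangle p (x (q n)) μ
      have h3 : dist p (x (q n)) = dist (x (q n)) p := dist_comm _ _
      linarith
  -- μ is a limit point : the construction
  have hlimμ : AStatLimitPt a x μ := by
    set M : ℕ → Set ℕ := fun j => {k | dist (x k) μ < 1 / ((j : ℝ) + 1)} with hM
    have hMd : ∀ j, Tendsto (fun n => ∑' k, Set.indicator (M j) (a n) k) atTop (𝓝 1) := by
      intro j
      have hpos : (0 : ℝ) < 1 / ((j : ℝ) + 1) := by positivity
      have := dens_compl summ tot (h _ hpos)
      have heq : ({k | 1 / ((j : ℝ) + 1) ≤ dist (x k) μ} : Set ℕ)ᶜ = M j := by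
        ext k; simp [hM, not_le]
      rwa [heq] at this
    choose g hg using fun (j m N : ℕ) => step_lemma pos summ cols (hMd j) m N
    set F : ℕ → Finset ℕ := fun j => (blockSeq g j).1 with hF
    set nn : ℕ → ℕ := fun j => (blockSeq g j).2 with hnn
    have hP : ∀ j, (F j).Nonempty ∧ (↑(F j) : Set ℕ) ⊆ M j ∧
        (1/4 : ℝ) < ∑ k ∈ F j, a (nn j) k := by
      intro j
      cases j with
      | zero =>
        obtain ⟨-, h1, h2, -, h3⟩ := hg 0 0 0
        exact ⟨h1, h2, h3⟩
      | succ i =>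
        obtain ⟨-, h1, h2, -, h3⟩ := hg (i + 1) ((blockSeq g i).1.sup id) ((blockSeq g i).2 + 1)
        exact ⟨h1, h2, h3⟩
    have hgt : ∀ j, ∀ k ∈ F (j + 1), (F j).sup id < k := by
      intro j
      exact (hg (j + 1) ((blockSeq g j).1.sup id) ((blockSeq g j).2 + 1)).2.2.2.1
    have hnmono : StrictMono nn := by
      refine strictMono_nat_of_lt_succ fun j => ?_
      have h1 := (hg (j + 1) ((blockSeq g j).1.sup id) ((blockSeq g j).2 + 1)).1
      have e1 : nn (j + 1) = (g (j + 1) ((blockSeq g j).1.sup id) ((blockSeq g j).2 + 1)).2 := rfl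
      have e2 : nn j = (blockSeq g j).2 := rfl
      omega
    have hsupmono : Monotone fun j => (F j).sup id := by
      refine monotone_nat_of_le_succ fun j => ?_
      obtain ⟨k, hk⟩ := (hP (j + 1)).1
      exact le_trans (le_of_lt (hgt j k hk)) (Finset.le_sup (f := id) hk)
    set K : Set ℕ := ⋃ j, (↑(F j) : Set ℕ) with hK
    have hKinf : K.Infinite := by
      have he : ∀ j, (hP j).1.choose ∈ F j := fun j => (hP j).1.choose_spec
      have hmono : StrictMono fun j => (hP j).1.choose := by
        refine strictMono_nat_of_lt_succ fun j => ?_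
        exact lt_of_le_of_lt (Finset.le_sup (f := id) (he j)) (hgt j _ (he (j + 1)))
      exact Set.infinite_of_injective_forall_mem hmono.injective
        (fun j => Set.mem_iUnion.mpr ⟨j, he j⟩)
    haveI : Infinite K := Set.infinite_coe_iff.mpr hKinf
    set q : ℕ → ℕ := fun n => Nat.orderEmbeddingOfSet K n with hq
    have hqmono : StrictMono q := (Nat.orderEmbeddingOfSet K).strictMono
    have hqrange : Set.range q = K := Nat.orderEmbeddingOfSet_range K
    have hqmem : ∀ n, q n ∈ K := fun n => hqrange ▸ Set.mem_range_self n
    refine ⟨q, hqmono, ?_, ?_⟩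
    · -- not density zero
      intro hd
      obtain ⟨N, hN⟩ := eventually_atTop.mp
        (hd.eventually (eventually_lt_nhds (show (0:ℝ) < 1/4 by norm_num)))
      have h1 : (1/4 : ℝ) < ∑ k ∈ F N, a (nn N) k := (hP N).2.2
      have h2 : ∑ k ∈ F N, a (nn N) k ≤ ∑' k, Set.indicator (Set.range q) (a (nn N)) k := by
        have heq : ∀ k ∈ F N, a (nn N) k = Set.indicator (Set.range q) (a (nn N)) k := by
          intro k hk
          rw [Set.indicator_of_mem (hqrange ▸ Set.mem_iUnion.mpr ⟨N, hk⟩)]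
        rw [Finset.sum_congr rfl heq]
        exact Summable.sum_le_tsum (F N) (fun k _ => Set.indicator_nonneg (fun k _ => pos _ k) k)
          ((summ _).indicator _)
      have h3 := hN (nn N) (hnmono.le_apply)
      linarith
    · -- convergence along q
      rw [Metric.tendsto_atTop]
      intro ε hε
      obtain ⟨J, hJ⟩ := exists_nat_one_div_lt hε
      refine ⟨(F J).sup id + 1, fun n hn => ?_⟩
      have hqn : (F J).sup id < q n := lt_of_lt_of_le (by omega) (le_trans hn hqmono.le_apply)
      obtain ⟨j, hj⟩ := Set.mem_iUnion.mp (hqmem n)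
      have hJj : J < j := by
        by_contra hle
        have : q n ≤ (F J).sup id :=
          le_trans (Finset.le_sup (f := id) hj) (hsupmono (not_lt.mp hle))
        omega
      have hdist : dist (x (q n)) μ < 1 / ((j : ℝ) + 1) := (hP j).2.1 hj
      have hle : (1 : ℝ) / ((j : ℝ) + 1) ≤ 1 / ((J : ℝ) + 1) := by
        apply one_div_le_one_div_of_le (by positivity)
        exact_mod_cast by omega
      calc dist (x (q n)) μ < 1 / ((j : ℝ) + 1) := hdist
        _ ≤ 1 / ((J : ℝ) + 1) := hle
        _ < ε := hJ
  constructor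
  · ext p
    simp only [Set.mem_setOf_eq, Set.mem_singleton_iff]
    exact ⟨hlimsub p, fun hp => hp ▸ hlimμ⟩
  · ext p
    simp only [Set.mem_setOf_eq, Set.mem_singleton_iff]
    exact ⟨hclsub p, fun hp => hp ▸ hclμ⟩
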